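/- (No power before the budget for testing the auditor's null.) Let F : (ℕ → A) → ℕ → ℝ be the power functional of an anytime-valid testing procedure, assumed to depend only on the observed prefix: for all sequences S, S' : ℕ → A and all t, if S k = S' k for every k ≤ t then F S t = F S' t. For m' ∈ ℕ, say a sequence S satisfies the singleton auditor's null H0^{aud,m'} if V (S t) < q for all t ≥ m', and satisfies the singleton auditor's alternative H1^{aud,m'} if there exists t ≥ m' with V (S t) ≥ q. Fix a budget m ∈ ℕ and level α ∈ ℝ, and assume (i) there exists a* ∈ A with V a* < q, and (ii) for every m' with 1 ≤ m' ≤ m, every sequence S satisfying H0^{aud,m'}, and every t < m', one has F S t ≤ α. Then for every m' with 1 ≤ m' ≤ m, every sequence S satisfying H1^{aud,m'}, and every t < m', one also has F S t ≤ α. -/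
import Mathlib

/-- No power before the budget for testing the auditor's null: if an anytime-valid
testing procedure (whose power functional `F` depends only on the observed prefix)
has Type-I error at most `α` before time `m'` under every sequence satisfying the
singleton auditor's null `H0^{aud,m'}`, for every `1 ≤ m' ≤ m`, then its power before
time `m'` under any sequence satisfying the singleton auditor's alternative
`H1^{aud,m'}` is also at most `α`, for every `1 ≤ m' ≤ m`. -/
theorem no_power_before_budget
    {A : Type*} (V : A → ℝ) (q : ℝ) (F : (ℕ → A) → ℕ → ℝ)
    (m : ℕ) (α : ℝ)
    (hprefix : ∀ (S S' : ℕ → A) (t : ℕ), (∀ k ≤ t, S k = S' k) → F S t = F S' t)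
    (hfail : ∃ a : A, V a < q)
    (hlevel : ∀ m', 1 ≤ m' → m' ≤ m → ∀ S : ℕ → A,
      (∀ t ≥ m', V (S t) < q) → ∀ t < m', F S t ≤ α) :
    ∀ m', 1 ≤ m' → m' ≤ m → ∀ S : ℕ → A,
      (∃ t ≥ m', V (S t) ≥ q) → ∀ t < m', F S t ≤ α := by
  obtain ⟨a, ha⟩ := hfail
  intro m' h1 hm S _ t ht
  set S' : ℕ → A := fun k => if k < m' then S k else a with hS'
  have hnull : ∀ u ≥ m', V (S' u) < q := by
    intro u hu
    simp [hS', Nat.not_lt.mpr hu, ha]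
  have heq : F S t = F S' t := by
    apply hprefix
    intro k hk
    simp [hS', lt_of_le_of_lt hk ht]
  rw [heq]
  exact hlevel m' h1 hm S' hnull t ht
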